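/- Let P be a string of length m over alphabet Sigma with p-period rho, and let T be a text. Let X be the set of positions i within a fixed window of length 3m/2 of T at which P parameterize-matches T[i..i+m-1]. Then X can be partitioned into a set Y with |Y| <= 6|Sigma| and a set A, with max(Y) < min(A), such that A is an arithmetic progression with common difference rho. -/

import Mathlib

/-- Predecessor value: smallest positive `d ≤ j` with `S (j-d) = S j`, or 0 if none. -/
noncomputable def predVal {α : Type*} (S : ℕ → α) (j : ℕ) : ℕ :=
  sInf {d : ℕ | 0 < d ∧ d ≤ j ∧ S (j - d) = S j}

/-- Parameterized match between the length-`n` strings `S` and `S'`. -/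
def PMatch {α : Type*} (n : ℕ) (S S' : ℕ → α) : Prop :=
  ∃ f : α → α, Function.Injective f ∧ ∀ j < n, S' j = f (S j)

/-- `ρ` is a p-period of the length-`m` string `P`. -/
def IsPPeriod {α : Type*} (m : ℕ) (P : ℕ → α) (ρ : ℕ) : Prop :=
  0 < ρ ∧ ρ < m ∧ PMatch (m - ρ) P (fun k => P (ρ + k))

/-- `ρ` is the p-period (the smallest one) of the length-`m` string `P`. -/
def IsMinPPeriod {α : Type*} (m : ℕ) (P : ℕ → α) (ρ : ℕ) : Prop :=
  IsPPeriod m P ρ ∧ ∀ ρ', IsPPeriod m P ρ' → ρ ≤ ρ'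

/-- The p-period of the length-`n` string `P`. -/
noncomputable def pPeriod {α : Type*} (n : ℕ) (P : ℕ → α) : ℕ :=
  sInf {ρ | IsPPeriod n P ρ}

/-- `a` is the smallest index such that every symbol of the length-`m` string `P`
occurs in `P[0..a]`. -/
def MinAlphaIndex {α : Type*} (m : ℕ) (P : ℕ → α) (a : ℕ) : Prop :=
  (∀ j < m, ∃ i ≤ a, P i = P j) ∧ ∀ a' < a, ¬ (∀ j < m, ∃ i ≤ a', P i = P j)

/-- Two p-matches of `P` at distance `e < m` yield a p-period `e` of `P`. -/
lemma aux_period_of_two_matches {σ : Type*} [Fintype σ] {m : ℕ} {P T : ℕ → σ} {i e : ℕ}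
    (he : 0 < e) (hem : e < m)
    (h1 : PMatch m P (fun k => T (i + k)))
    (h2 : PMatch m P (fun k => T (i + e + k))) :
    IsPPeriod m P e := by
  obtain ⟨h, hinj, hh⟩ := h1
  obtain ⟨h', hinj', hh'⟩ := h2
  have hbij : Function.Bijective h := Finite.injective_iff_bijective.mp hinj
  set eqv := Equiv.ofBijective h hbij with heqv
  refine ⟨he, hem, fun y => eqv.symm (h' y),
    fun y z hyz => hinj' (eqv.symm.injective hyz), ?_⟩
  intro k hk
  apply eqv.injective
  show eqv (P (e + k)) = eqv (eqv.symm (h' (P k)))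
  rw [Equiv.apply_symm_apply]
  have e1 : T (i + (e + k)) = h (P (e + k)) := hh (e + k) (by omega)
  have e2 : T (i + e + k) = h' (P k) := hh' k (by omega)
  show h (P (e + k)) = h' (P k)
  rw [← e1, ← e2, show i + (e + k) = i + e + k from by omega]

/-- The key extension lemma: if all symbols of `P` occur by position `a`, and `P`
p-matches `T` at `i` and `i + d` with `ρ < d` and `a + ρ + d < m`, then `P`
p-matches `T` at `i + ρ`. -/
lemma aux_step {σ : Type*} [Fintype σ] {m ρ : ℕ} {P T : ℕ → σ} {i d a : ℕ}
    (hfP : PMatch (m - ρ) P (fun k => P (ρ + k)))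
    (ha : ∀ j < m, ∃ k ≤ a, P k = P j)
    (hd : ρ < d) (hlt : a + ρ + d < m)
    (h1 : PMatch m P (fun k => T (i + k)))
    (h2 : PMatch m P (fun k => T (i + d + k))) :
    PMatch m P (fun k => T (i + ρ + k)) := by
  obtain ⟨f, finj, hfp⟩ := hfP
  obtain ⟨h, hinj, hh⟩ := h1
  obtain ⟨h', hinj', hh'⟩ := h2
  have hbij : Function.Bijective h := Finite.injective_iff_bijective.mp hinj
  set eqv := Equiv.ofBijective h hbij with heqv
  set g : σ → σ := fun y => eqv.symm (h' y) with hg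
  have hhg : ∀ y, h (g y) = h' y := fun y => eqv.apply_symm_apply (h' y)
  have hgp : ∀ k, k < m - d → P (d + k) = g (P k) := by
    intro k hk
    apply hinj
    rw [hhg]
    have e1 : T (i + (d + k)) = h (P (d + k)) := hh (d + k) (by omega)
    have e2 : T (i + d + k) = h' (P k) := hh' k (by omega)
    rw [← e1, ← e2, show i + (d + k) = i + d + k from by omega]
  refine ⟨h ∘ f, hinj.comp finj, ?_⟩
  intro j hj
  show T (i + ρ + j) = h (f (P j))
  rcases lt_or_ge j (m - ρ) with hjlt | hjge
  · have e1 : T (i + (ρ + j)) = h (P (ρ + j)) := hh (ρ + j) (by omega)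
    have f0 : P (ρ + j) = f (P j) := hfp j hjlt
    rw [show i + ρ + j = i + (ρ + j) from by omega, e1, f0]
  · have hdj : d ≤ j := by omega
    set u := j - d with hu
    obtain ⟨k, hka, hPk⟩ := ha u (by omega)
    have f1 : P (ρ + u) = f (P u) := hfp u (by omega)
    have f2 : P (ρ + k) = f (P k) := hfp k (by omega)
    have f3 : P (d + (ρ + k)) = g (P (ρ + k)) := hgp (ρ + k) (by omega)
    have f4 : P (d + k) = g (P k) := hgp k (by omega)
    have f5 : P (ρ + (d + k)) = f (P (d + k)) := hfp (d + k) (by omega)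
    have f6 : P (d + u) = g (P u) := hgp u (by omega)
    have e2 : T (i + d + (ρ + u)) = h' (P (ρ + u)) := hh' (ρ + u) (by omega)
    have e3 : T (i + ρ + j) = h' (P (ρ + u)) := by
      rw [← e2, show i + d + (ρ + u) = i + ρ + j from by omega]
    rw [e3, ← hhg]
    congr 1
    have hPj : P j = g (P u) := by rw [show j = d + u from by omega]; exact f6
    rw [hPj, f1, ← hPk, ← f2, ← f3, ← f4, ← f5,
      show d + (ρ + k) = ρ + (d + k) from by omega]

/-- Structure of parameterized matches in a window of length 3m/2: the match positions
split into a small set Y of size at most 6|Sigma| followed by an arithmetic progression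
with common difference the p-period. -/
theorem pmatch_positions_structure {σ : Type*} [Fintype σ] (m ρ t : ℕ) (P T : ℕ → σ)
    (hρ : IsMinPPeriod m P ρ) :
    ∃ (Y A : Set ℕ) (i0 L : ℕ),
      {i : ℕ | t ≤ i ∧ 2 * (i + m) ≤ 2 * t + 3 * m ∧ PMatch m P (fun k => T (i + k))}
        = Y ∪ A ∧
      Disjoint Y A ∧
      Y.Finite ∧ Y.ncard ≤ 6 * Fintype.card σ ∧
      (∀ y ∈ Y, ∀ x ∈ A, y < x) ∧
      A = (fun k => i0 + k * ρ) '' (Set.Iio L) := by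
  classical
  obtain ⟨⟨hρpos, hρm, hfP⟩, hmin⟩ := hρ
  have hm1 : 0 < m := by omega
  set X := {i : ℕ | t ≤ i ∧ 2 * (i + m) ≤ 2 * t + 3 * m ∧ PMatch m P (fun k => T (i + k))}
    with hXdef
  have hmemX : ∀ i, i ∈ X ↔
      (t ≤ i ∧ 2 * (i + m) ≤ 2 * t + 3 * m ∧ PMatch m P (fun k => T (i + k))) := by
    intro i; rw [hXdef]; rfl
  have hXsub : X ⊆ Set.Icc t (t + m) := by
    intro i hi
    obtain ⟨h1, h2, -⟩ := (hmemX i).mp hi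
    exact ⟨h1, by omega⟩
  have hfin : X.Finite := (Set.finite_Icc t (t + m)).subset hXsub
  -- first-occurrence machinery
  have hex : ∀ j : ℕ, ∃ k, P k = P j := fun j => ⟨j, rfl⟩
  set ff : ℕ → ℕ := fun j => Nat.find (hex j) with hff
  have hffspec : ∀ j, P (ff j) = P j := fun j => Nat.find_spec (hex j)
  have hffmin : ∀ j, ∀ k, k < ff j → P k ≠ P j := fun j k hk => Nat.find_min (hex j) hk
  obtain ⟨j0, hj0mem, hj0⟩ :=
    Finset.exists_mem_eq_sup (Finset.range m) ⟨0, Finset.mem_range.mpr hm1⟩ ff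
  set a := (Finset.range m).sup ff with hadef
  have haj : a = ff j0 := hj0
  have ham : a < m := by
    have h1 : ff j0 ≤ j0 := Nat.find_min' (hex j0) rfl
    have h2 : j0 < m := Finset.mem_range.mp hj0mem
    omega
  have ha : ∀ j < m, ∃ k ≤ a, P k = P j :=
    fun j hj => ⟨ff j, Finset.le_sup (Finset.mem_range.mpr hj), hffspec j⟩
  have hafirst : ∀ k, k < a → P k ≠ P a := by
    intro k hk heq
    have hPa : P a = P j0 := by rw [haj]; exact hffspec j0
    exact hffmin j0 k (haj ▸ hk) (heq.trans hPa)
  -- any two matches differ by a p-period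
  have hperiod : ∀ i, i ∈ X → ∀ i', i' ∈ X → i < i' → IsPPeriod m P (i' - i) := by
    intro i hi i' hi' hlt
    obtain ⟨hit, hiw, him⟩ := (hmemX i).mp hi
    obtain ⟨hit', hiw', him'⟩ := (hmemX i').mp hi'
    have h2m : 2 * (i' - i) ≤ m := by omega
    have hp2 : PMatch m P (fun k => T (i + (i' - i) + k)) := by
      rw [show i + (i' - i) = i' from by omega]; exact him'
    exact aux_period_of_two_matches (by omega) (by omega) him hp2
  have hdge : ∀ i, i ∈ X → ∀ i', i' ∈ X → i < i' → ρ ≤ i' - i :=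
    fun i hi i' hi' h => hmin _ (hperiod i hi i' hi' h)
  by_cases hC : 2 * (a + ρ) < m
  · -- Case A : all symbols occur early, X is an arithmetic progression
    have hclose : ∀ i, i ∈ X → ∀ i', i' ∈ X → i < i' → i + ρ ∈ X := by
      intro i hi i' hi' hlt
      obtain ⟨hit, hiw, him⟩ := (hmemX i).mp hi
      obtain ⟨hit', hiw', him'⟩ := (hmemX i').mp hi'
      have hge := hdge i hi i' hi' hlt
      rcases eq_or_lt_of_le hge with heq | hgt
      · rw [show i + ρ = i' from by omega]; exact hi'
      · have h2m : 2 * (i' - i) ≤ m := by omega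
        have hp2 : PMatch m P (fun k => T (i + (i' - i) + k)) := by
          rw [show i + (i' - i) = i' from by omega]; exact him'
        have hstep := aux_step hfP ha hgt (by omega) him hp2
        exact (hmemX (i + ρ)).mpr ⟨by omega, by omega, hstep⟩
    rcases X.eq_empty_or_nonempty with hXe | hXne
    · refine ⟨∅, ∅, 0, 0, by rw [hXe, Set.empty_union], by simp, Set.finite_empty,
        by simp, by simp, ?_⟩
      ext x; simp
    · have hbdd : BddAbove X := hfin.bddAbove
      set M := sSup X with hM
      have hMX : M ∈ X := Nat.sSup_mem hXne hbdd
      have hle : ∀ i, i ∈ X → i ≤ M := fun i hi => le_csSup hbdd hi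
      set μ := sInf X with hμ
      have hμX : μ ∈ X := Nat.sInf_mem hXne
      have hgeμ : ∀ i, i ∈ X → μ ≤ i := fun i hi => Nat.sInf_le hi
      have hμM : μ ≤ M := hle μ hμX
      have claim1 : ∀ k, μ + k * ρ ≤ M → μ + k * ρ ∈ X := by
        intro k
        induction k with
        | zero => intro _; simpa using hμX
        | succ n ih =>
          have hs : μ + (n + 1) * ρ = μ + n * ρ + ρ := by ring
          rw [hs]
          intro h
          obtain ⟨s, hsdef⟩ : ∃ s, μ + n * ρ = s := ⟨_, rfl⟩
          rw [hsdef] at h ih ⊢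
          have h1 : s ≤ M := by omega
          have hmem := ih h1
          have hlt2 : s < M := by omega
          exact hclose s hmem M hMX hlt2
      have claim2 : ∀ i, i ∈ X → ∃ k, i = μ + k * ρ := by
        intro i hi
        have hμi : μ ≤ i := hgeμ i hi
        have hiM : i ≤ M := hle i hi
        have h := Nat.div_add_mod' (i - μ) ρ
        have hrlt : (i - μ) % ρ < ρ := Nat.mod_lt _ hρpos
        set K := (i - μ) / ρ with hK
        set r := (i - μ) % ρ with hr
        obtain ⟨w, hw⟩ : ∃ w, K * ρ = w := ⟨_, rfl⟩
        rw [hw] at h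
        have hmem : μ + K * ρ ∈ X := by
          apply claim1
          rw [hw]; omega
        refine ⟨K, ?_⟩
        by_cases hr0 : r = 0
        · rw [hw]; omega
        · exfalso
          have hlt2 : μ + K * ρ < i := by rw [hw]; omega
          have hcon := hdge _ hmem i hi hlt2
          rw [hw] at hcon
          omega
      refine ⟨∅, X, μ, (M - μ) / ρ + 1, (Set.empty_union X).symm, by simp,
        Set.finite_empty, by simp, by simp, ?_⟩
      ext x
      simp only [Set.mem_image, Set.mem_Iio]
      constructor
      · intro hx
        obtain ⟨k, hk⟩ := claim2 x hx
        refine ⟨k, ?_, hk.symm⟩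
        have hxM : x ≤ M := hle x hx
        rw [hk] at hxM
        have h1 : k * ρ ≤ M - μ := Nat.le_sub_of_add_le (by rwa [add_comm] at hxM)
        have h2 : k ≤ (M - μ) / ρ := (Nat.le_div_iff_mul_le hρpos).mpr h1
        omega
      · rintro ⟨k, hk, rfl⟩
        apply claim1
        have h1 : k ≤ (M - μ) / ρ := by omega
        have h2 : k * ρ ≤ M - μ := (Nat.le_div_iff_mul_le hρpos).mp h1
        exact le_trans (add_le_add_right h2 μ) (by omega)
  · -- Case B : some symbol occurs only late, X has at most |σ| + 2 elements
    push_neg at hC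
    rcases X.eq_empty_or_nonempty with hXe | hXne
    · refine ⟨∅, ∅, 0, 0, by rw [hXe, Set.empty_union], by simp, Set.finite_empty,
        by simp, by simp, ?_⟩
      ext x; simp
    · have hbdd : BddAbove X := hfin.bddAbove
      set M := sSup X with hM
      have hMX : M ∈ X := Nat.sSup_mem hXne hbdd
      have hle : ∀ i, i ∈ X → i ≤ M := fun i hi => le_csSup hbdd hi
      -- if d ≤ a is a p-period, then a - d is a first-occurrence position
      have hfo : ∀ d, 0 < d → d ≤ a → IsPPeriod m P d →
          ∀ k, k < a - d → P k ≠ P (a - d) := by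
        intro d hd0 hda hper k hk heq
        obtain ⟨g, ginj, hg⟩ := hper.2.2
        have e1 : P (d + k) = g (P k) := hg k (by omega)
        have e2 : P (d + (a - d)) = g (P (a - d)) := hg (a - d) (by omega)
        have e3 : d + (a - d) = a := by omega
        have e4 : P (d + k) = P a := by rw [e1, heq, ← e2, e3]
        exact hafirst (d + k) (by omega) e4
      set X1 := {i : ℕ | i ∈ X ∧ i ≠ M ∧ M - i ≤ a} with hX1
      set X2 := {i : ℕ | i ∈ X ∧ i ≠ M ∧ a < M - i} with hX2
      have hX1sub : X1 ⊆ X := fun i hi => hi.1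
      have hX2sub : X2 ⊆ X := fun i hi => hi.1
      have hfin1 : X1.Finite := hfin.subset hX1sub
      have hfin2 : X2.Finite := hfin.subset hX2sub
      have hkey : ∀ i, i ∈ X1 → ∀ i', i' ∈ X1 → i < i' →
          P (a - (M - i)) ≠ P (a - (M - i')) := by
        intro i hi i' hi' hlt heq
        obtain ⟨hiX, hiM, hia⟩ := hi
        obtain ⟨hiX', hiM', hia'⟩ := hi'
        have hiltM : i < M := lt_of_le_of_ne (hle i hiX) hiM
        have hiltM' : i' < M := lt_of_le_of_ne (hle i' hiX') hiM'
        have hper' : IsPPeriod m P (M - i') := hperiod i' hiX' M hMX hiltM'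
        have hne : a - (M - i) < a - (M - i') := by omega
        exact hfo (M - i') (by omega) hia' hper' _ hne heq
      have hinj1 : Set.InjOn (fun i => P (a - (M - i))) X1 := by
        intro i hi i' hi' heq
        by_contra hne
        rcases lt_or_gt_of_ne hne with h | h
        · exact hkey i hi i' hi' h heq
        · exact hkey i' hi' i hi h heq.symm
      have hc1 : X1.ncard ≤ Fintype.card σ := by
        calc X1.ncard = ((fun i => P (a - (M - i))) '' X1).ncard :=
              (Set.ncard_image_of_injOn hinj1).symm
          _ ≤ (Set.univ : Set σ).ncard :=
              Set.ncard_le_ncard (Set.subset_univ _) Set.finite_univ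
          _ = Fintype.card σ := by rw [Set.ncard_univ, Nat.card_eq_fintype_card]
      have hc2 : X2.ncard ≤ 1 := by
        have hss : Set.Subsingleton X2 := by
          have key : ∀ u, u ∈ X2 → ∀ u', u' ∈ X2 → u < u' → False := by
            intro u hu u' hu' hlt
            obtain ⟨huX, huM, hua⟩ := hu
            obtain ⟨huX', huM', hua'⟩ := hu'
            have h1 : u < M := lt_of_le_of_ne (hle u huX) huM
            have h1' : u' < M := lt_of_le_of_ne (hle u' huX') huM'
            have hge := hdge u huX u' huX' hlt
            obtain ⟨hut, huw, -⟩ := (hmemX u).mp huX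
            obtain ⟨hMt, hMw, -⟩ := (hmemX M).mp hMX
            omega
          intro i hi i' hi'
          by_contra hne
          rcases lt_or_gt_of_ne hne with h | h
          · exact key i hi i' hi' h
          · exact key i' hi' i hi h
        rcases hss.eq_empty_or_singleton with h | ⟨x, h⟩
        · simp [h]
        · simp [h]
      have hYsub : X \ {M} ⊆ X1 ∪ X2 := by
        intro i hi
        obtain ⟨hiX, hiM⟩ := hi
        have hiM' : i ≠ M := by simpa using hiM
        by_cases h : M - i ≤ a
        · exact Or.inl ⟨hiX, hiM', h⟩
        · exact Or.inr ⟨hiX, hiM', by omega⟩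
      have hcard1 : 1 ≤ Fintype.card σ := Fintype.card_pos_iff.mpr ⟨P 0⟩
      have hYcard : (X \ {M}).ncard ≤ 6 * Fintype.card σ := by
        calc (X \ {M}).ncard ≤ (X1 ∪ X2).ncard :=
              Set.ncard_le_ncard hYsub (hfin1.union hfin2)
          _ ≤ X1.ncard + X2.ncard := Set.ncard_union_le _ _
          _ ≤ 6 * Fintype.card σ := by omega
      refine ⟨X \ {M}, {M}, M, 1, ?_, Set.disjoint_sdiff_left,
        hfin.subset Set.diff_subset, hYcard, ?_, ?_⟩
      · rw [Set.diff_union_self,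
          Set.union_eq_self_of_subset_right (Set.singleton_subset_iff.mpr hMX)]
      · intro y hy x hx
        rcases hx with rfl
        exact lt_of_le_of_ne (hle y hy.1) (by simpa using hy.2)
      · ext x
        simp only [Set.mem_singleton_iff, Set.mem_image, Set.mem_Iio]
        constructor
        · rintro rfl; exact ⟨0, by omega, by simp⟩
        · rintro ⟨k, hk, rfl⟩
          have : k = 0 := by omega
          subst this; simp
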